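/- The rewrite relation of the clocked λ-calculus is locally confluent: if M →c N₁ and M →c N₂, then there exists P with N₁ ↠c P and N₂ ↠c P. -/

import Mathlib

/-- clocked λ-terms: λ-terms with an extra unary constructor τ -/
inductive CLam : Type
  | var : Nat → CLam
  | app : CLam → CLam → CLam
  | lam : CLam → CLam
  | tau : CLam → CLam
deriving DecidableEq

namespace CLam

def lift (d : Nat) : CLam → CLam
  | var n => if n < d then var n else var (n+1)
  | app M N => app (lift d M) (lift d N)
  | lam M => lam (lift (d+1) M)
  | tau M => tau (lift d M)

def subst (k : Nat) (N : CLam) : CLam → CLam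
  | var n => if n = k then N else if k < n then var (n-1) else var n
  | app A B => app (subst k N A) (subst k N B)
  | lam A => lam (subst (k+1) (lift 0 N) A)
  | tau A => tau (subst k N A)

/-- one-step clocked reduction: compatible closure of
    (λ.M)N → τ(M[0:=N]) and (τ M)N → τ(M N) -/
inductive CStep : CLam → CLam → Prop
  | beta (M N : CLam) : CStep (app (lam M) N) (tau (subst 0 N M))
  | tauApp (M N : CLam) : CStep (app (tau M) N) (tau (app M N))
  | appL {M M'} (N) : CStep M M' → CStep (app M N) (app M' N)
  | appR (M) {N N'} : CStep N N' → CStep (app M N) (app M N')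
  | lam {M M'} : CStep M M' → CStep (lam M) (lam M')
  | tau {M M'} : CStep M M' → CStep (tau M) (tau M')

abbrev CStar : CLam → CLam → Prop := Relation.ReflTransGen CStep

/-- n-fold τ -/
def tauN : Nat → CLam → CLam
  | 0, M => M
  | n+1, M => tau (tauN n M)

end CLam

open CLam

namespace CLam

lemma lift_lift (M : CLam) : ∀ i j, i ≤ j → lift i (lift j M) = lift (j+1) (lift i M) := by
  induction M with
  | var n =>
    intro i j h
    simp only [lift]
    split_ifs <;>
      (try simp only [lift, subst]) <;>
      (try split_ifs) <;>
      first
        | rfl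
        | omega
        | (exfalso; omega)
        | (simp only [var.injEq]; omega)
        | (rw [subst_lift_cancel])
        | (exact (subst_lift_cancel _ _ _).symm)
  | app A B ihA ihB => intro i j h; simp [lift, ihA _ _ h, ihB _ _ h]
  | lam A ih => intro i j h; simp [lift, ih (i+1) (j+1) (by omega)]
  | tau A ih => intro i j h; simp [lift, ih _ _ h]

lemma lift_subst (M : CLam) : ∀ i k (N : CLam), i ≤ k →
    lift i (subst k N M) = subst (k+1) (lift i N) (lift i M) := by
  induction M with
  | var n =>
    intro i k N h
    simp only [subst, lift]
    split_ifs <;>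
      (try simp only [lift, subst]) <;>
      (try split_ifs) <;>
      first
        | rfl
        | omega
        | (exfalso; omega)
        | (simp only [var.injEq]; omega)
        | (rw [subst_lift_cancel])
        | (exact (subst_lift_cancel _ _ _).symm)
  | app A B ihA ihB => intro i k N h; simp [lift, subst, ihA _ _ _ h, ihB _ _ _ h]
  | lam A ih =>
    intro i k N h
    simp only [lift, subst, ih (i+1) (k+1) (lift 0 N) (by omega)]
    rw [lift_lift N 0 i (Nat.zero_le _)]
  | tau A ih => intro i k N h; simp [lift, subst, ih _ _ _ h]

lemma subst_lift_cancel (M : CLam) : ∀ k N, subst k N (lift k M) = M := by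
  induction M with
  | var n =>
    intro k N
    simp only [lift]
    split_ifs <;>
      simp only [subst] <;>
      (try split_ifs) <;>
      first
        | rfl
        | (exfalso; omega)
        | (simp only [var.injEq]; omega)
  | app A B ihA ihB => intro k N; simp [lift, subst, ihA, ihB]
  | lam A ih => intro k N; simp [lift, subst, ih]
  | tau A ih => intro k N; simp [lift, subst, ih]

lemma lift_subst' (M : CLam) : ∀ i k (N : CLam), k ≤ i →
    lift i (subst k N M) = subst k (lift i N) (lift (i+1) M) := by
  induction M with
  | var n =>
    intro i k N h
    simp only [subst, lift]
    split_ifs <;>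
      (try simp only [lift, subst]) <;>
      (try split_ifs) <;>
      first
        | rfl
        | omega
        | (exfalso; omega)
        | (simp only [var.injEq]; omega)
        | (rw [subst_lift_cancel])
        | (exact (subst_lift_cancel _ _ _).symm)
  | app A B ihA ihB => intro i k N h; simp [lift, subst, ihA _ _ _ h, ihB _ _ _ h]
  | lam A ih =>
    intro i k N h
    simp only [lift, subst, ih (i+1) (k+1) (lift 0 N) (by omega)]
    rw [lift_lift N 0 i (Nat.zero_le _)]
  | tau A ih => intro i k N h; simp [lift, subst, ih _ _ _ h]

lemma subst_subst (M : CLam) : ∀ i k (N L : CLam), i ≤ k →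
    subst k N (subst i L M) = subst i (subst k N L) (subst (k+1) (lift i N) M) := by
  induction M with
  | var n =>
    intro i k N L h
    simp only [subst]
    split_ifs <;>
      (try simp only [lift, subst]) <;>
      (try split_ifs) <;>
      first
        | rfl
        | omega
        | (exfalso; omega)
        | (simp only [var.injEq]; omega)
        | (rw [subst_lift_cancel])
        | (exact (subst_lift_cancel _ _ _).symm)
  | app A B ihA ihB => intro i k N L h; simp [subst, ihA _ _ _ _ h, ihB _ _ _ _ h]
  | lam A ih =>
    intro i k N L h
    simp only [subst, ih (i+1) (k+1) (lift 0 N) (lift 0 L) (by omega)]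
    rw [← lift_subst L 0 k N (Nat.zero_le _), lift_lift N 0 i (Nat.zero_le _)]
  | tau A ih => intro i k N L h; simp [subst, ih _ _ _ _ h]


lemma step_lift {M M'} (h : CStep M M') : ∀ d, CStep (lift d M) (lift d M') := by
  induction h with
  | beta M N =>
    intro d
    simp only [lift]
    rw [lift_subst' M d 0 N (Nat.zero_le d)]
    exact CStep.beta _ _
  | tauApp M N => intro d; exact CStep.tauApp _ _
  | appL N _ ih => intro d; exact CStep.appL _ (ih d)
  | appR M _ ih => intro d; exact CStep.appR _ (ih d)
  | lam _ ih => intro d; exact CStep.lam (ih (d+1))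
  | tau _ ih => intro d; exact CStep.tau (ih d)

lemma step_subst {M M'} (h : CStep M M') : ∀ k N, CStep (subst k N M) (subst k N M') := by
  induction h with
  | beta M N' =>
    intro k N
    simp only [subst]
    rw [subst_subst M 0 k N N' (Nat.zero_le k)]
    exact CStep.beta _ _
  | tauApp M N' => intro k N; exact CStep.tauApp _ _
  | appL _ _ ih => intro k N; exact CStep.appL _ (ih k N)
  | appR _ _ ih => intro k N; exact CStep.appR _ (ih k N)
  | lam _ ih => intro k N; exact CStep.lam (ih (k+1) (lift 0 N))
  | tau _ ih => intro k N; exact CStep.tau (ih k N)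

lemma star_appL {M M'} (N) (h : CStar M M') : CStar (app M N) (app M' N) :=
  Relation.ReflTransGen.lift (fun x => app x N) (fun _ _ hs => CStep.appL N hs) _ _ h

lemma star_appR (M) {N N'} (h : CStar N N') : CStar (app M N) (app M N') :=
  Relation.ReflTransGen.lift (fun x => app M x) (fun _ _ hs => CStep.appR M hs) _ _ h

lemma star_lam {M M'} (h : CStar M M') : CStar (lam M) (lam M') :=
  Relation.ReflTransGen.lift lam (fun _ _ hs => CStep.lam hs) _ _ h

lemma star_tau {M M'} (h : CStar M M') : CStar (tau M) (tau M') :=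
  Relation.ReflTransGen.lift tau (fun _ _ hs => CStep.tau hs) _ _ h

lemma star_subst_arg (M : CLam) : ∀ k {N N'}, CStep N N' →
    CStar (subst k N M) (subst k N' M) := by
  induction M with
  | var n =>
    intro k N N' h
    simp only [subst]
    split_ifs
    · exact Relation.ReflTransGen.single h
    · exact Relation.ReflTransGen.refl
    · exact Relation.ReflTransGen.refl
  | app A B ihA ihB =>
    intro k N N' h
    exact (star_appL _ (ihA k h)).trans (star_appR _ (ihB k h))
  | lam A ih =>
    intro k N N' h
    exact star_lam (ih (k+1) (step_lift h 0))
  | tau A ih =>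
    intro k N N' h
    exact star_tau (ih k h)


end CLam

theorem clocked_locally_confluent :
    ∀ M N₁ N₂ : CLam, CStep M N₁ → CStep M N₂ →
      ∃ P : CLam, CStar N₁ P ∧ CStar N₂ P := by
  intro M N₁ N₂ h1 h2
  induction h1 generalizing N₂ with
  | beta M N =>
    cases h2 with
    | beta => exact ⟨_, .refl, .refl⟩
    | appL _ h =>
      cases h with
      | lam h' =>
        exact ⟨_, .single (CStep.tau (step_subst h' 0 N)), .single (CStep.beta _ _)⟩
    | appR _ h =>
      exact ⟨_, star_tau (star_subst_arg M 0 h), .single (CStep.beta _ _)⟩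
  | tauApp M N =>
    cases h2 with
    | tauApp => exact ⟨_, .refl, .refl⟩
    | appL _ h =>
      cases h with
      | tau h' =>
        exact ⟨_, .single (CStep.tau (CStep.appL N h')), .single (CStep.tauApp _ _)⟩
    | appR _ h =>
      exact ⟨_, .single (CStep.tau (CStep.appR M h)), .single (CStep.tauApp _ _)⟩
  | appL N h ih =>
    cases h2 with
    | beta M₀ _ =>
      cases h with
      | lam h' =>
        exact ⟨_, .single (CStep.beta _ _), .single (CStep.tau (step_subst h' 0 N))⟩
    | tauApp M₀ _ =>
      cases h with
      | tau h' =>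
        exact ⟨_, .single (CStep.tauApp _ _), .single (CStep.tau (CStep.appL N h'))⟩
    | appL _ h2' =>
      obtain ⟨P, hp1, hp2⟩ := ih _ h2'
      exact ⟨app P N, star_appL N hp1, star_appL N hp2⟩
    | appR _ h2' =>
      exact ⟨_, .single (CStep.appR _ h2'), .single (CStep.appL _ h)⟩
  | appR M h ih =>
    cases h2 with
    | beta M₀ _ =>
      exact ⟨_, .single (CStep.beta _ _), star_tau (star_subst_arg M₀ 0 h)⟩
    | tauApp M₀ _ =>
      exact ⟨_, .single (CStep.tauApp _ _), .single (CStep.tau (CStep.appR M₀ h))⟩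
    | appL _ h2' =>
      exact ⟨_, .single (CStep.appL _ h2'), .single (CStep.appR _ h)⟩
    | appR _ h2' =>
      obtain ⟨P, hp1, hp2⟩ := ih _ h2'
      exact ⟨app M P, star_appR M hp1, star_appR M hp2⟩
  | lam h ih =>
    cases h2 with
    | lam h2' =>
      obtain ⟨P, hp1, hp2⟩ := ih _ h2'
      exact ⟨lam P, star_lam hp1, star_lam hp2⟩
  | tau h ih =>
    cases h2 with
    | tau h2' =>
      obtain ⟨P, hp1, hp2⟩ := ih _ h2'
      exact ⟨tau P, star_tau hp1, star_tau hp2⟩
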